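/- Let m = m(n) = ω(n² log n) and M ~ M(n, m). Let μ(M) = max{μ(e) : e a pair of distinct vertices} and μ_min(M) = min{μ(e) : e a pair of distinct vertices}. Then with high probability μ(M) − μ_min(M) = O(√(m·log n / n²)). (log denotes the natural logarithm.) -/

import Mathlib

open Finset Filter Asymptotics

namespace GS

variable {V : Type*}

/-- A loopless multigraph on `V`, given by a symmetric multiplicity function
with zero diagonal. -/
def IsMultigraph (G : V → V → ℕ) : Prop :=
  (∀ u v, G u v = G v u) ∧ ∀ v, G v v = 0

/-- The degree of a vertex (edges counted with multiplicity). -/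
def mdeg [Fintype V] (G : V → V → ℕ) (v : V) : ℕ := ∑ u, G v u

/-- The maximum degree `Δ(G)`. -/
def maxDeg [Fintype V] (G : V → V → ℕ) : ℕ := Finset.univ.sup (mdeg G)

/-- The number of edges (with multiplicity) with both endpoints in `S`. -/
def edgesIn [DecidableEq V] (G : V → V → ℕ) (S : Finset V) : ℕ :=
  (∑ v ∈ S, ∑ u ∈ S, G v u) / 2

/-- A proper `k`-edge-colouring: every copy of an edge gets a colour
(`(c u v).card = G u v`), symmetric, and edge copies sharing a vertex get
distinct colours. -/
def IsProperEdgeColoring [Fintype V] (G : V → V → ℕ) (k : ℕ)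
    (c : V → V → Finset (Fin k)) : Prop :=
  (∀ u v, c u v = c v u) ∧ (∀ u v, (c u v).card = G u v) ∧
    ∀ v u w, u ≠ w → Disjoint (c v u) (c v w)

/-- `G` admits a proper `k`-edge-colouring. -/
def Colorable [Fintype V] (G : V → V → ℕ) (k : ℕ) : Prop :=
  ∃ c : V → V → Finset (Fin k), IsProperEdgeColoring G k c

/-- The chromatic index `χ'(G)`. -/
noncomputable def chromIndex [Fintype V] (G : V → V → ℕ) : ℕ :=
  sInf {k | Colorable G k}

/-- `ρ(S) = e(G[S]) / ⌊|S|/2⌋`. -/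
noncomputable def rhoS [DecidableEq V] (G : V → V → ℕ) (S : Finset V) : ℝ :=
  (edgesIn G S : ℝ) / ((S.card / 2 : ℕ) : ℝ)

/-- `ρ(G)`, the maximum of `ρ(S)` over all `S` with `|S| ≥ 2`. -/
noncomputable def rho [Fintype V] [DecidableEq V] (G : V → V → ℕ) : ℝ :=
  sSup {r : ℝ | ∃ S : Finset V, 2 ≤ S.card ∧ r = rhoS G S}

/-- The maximum edge multiplicity `μ(G)`. -/
def muMax [Fintype V] [DecidableEq V] (G : V → V → ℕ) : ℕ :=
  Finset.univ.sup fun p : V × V => if p.1 = p.2 then 0 else G p.1 p.2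

/-- The minimum edge multiplicity `μ_min(G)` (over pairs of distinct vertices). -/
noncomputable def muMin (G : V → V → ℕ) : ℕ :=
  sInf {t | ∃ u v : V, u ≠ v ∧ G u v = t}

/-- The second largest degree `d₂`. -/
def secondDeg [Fintype V] [DecidableEq V] (G : V → V → ℕ) : ℕ :=
  Finset.univ.sup fun p : V × V => if p.1 = p.2 then 0 else min (mdeg G p.1) (mdeg G p.2)

/-- Unordered pairs of distinct vertices of `[n]`. -/
abbrev NDPair (n : ℕ) := {p : Sym2 (Fin n) // ¬ p.IsDiag}

/-- An outcome of the random multigraph process `M(n,m)`: a choice of one of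
the pairs for each of the `m` rounds. -/
abbrev MGOutcome (n m : ℕ) := Fin m → NDPair n

/-- The multiplicity function of the multigraph produced by an outcome. -/
def mgGraph {n m : ℕ} (ω : MGOutcome n m) : Fin n → Fin n → ℕ := fun u v =>
  (Finset.univ.filter fun i => (ω i : Sym2 (Fin n)) = s(u, v)).card

/-- The number of times the pair `p` was chosen. -/
def pairCount {n m : ℕ} (ω : MGOutcome n m) (p : NDPair n) : ℕ :=
  (Finset.univ.filter fun i => ω i = p).card

/-- The probability, under the uniform measure `M(n,m)`, of the event `P`. -/
noncomputable def mgProb (n m : ℕ) (P : MGOutcome n m → Prop) : ℝ :=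
  (Nat.card {ω : MGOutcome n m // P ω} : ℝ) / (Nat.card (MGOutcome n m) : ℝ)

end GS

namespace GSAux

variable {α : Type*} [Fintype α] [DecidableEq α] {m : ℕ}

lemma sum_ite_eq_card (p : α) (x : ℝ) :
    ∑ a : α, (if a = p then x else 1) = x + ((Fintype.card α : ℝ) - 1) := by
  have h : ∀ a : α, (if a = p then x else 1) = (if a = p then x - 1 else 0) + 1 := by
    intro a; split <;> ring
  rw [Finset.sum_congr rfl fun a _ => h a, Finset.sum_add_distrib,
    Finset.sum_ite_eq' univ p (fun _ => x - 1)]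
  simp only [Finset.mem_univ, if_true, Finset.sum_const, Finset.card_univ, nsmul_eq_mul,
    mul_one]
  ring

lemma sum_pow_cnt (p : α) (x : ℝ) :
    ∑ ω : Fin m → α, x ^ (univ.filter fun i => ω i = p).card
      = (x + ((Fintype.card α : ℝ) - 1)) ^ m := by
  have h1 : ∀ ω : Fin m → α,
      x ^ (univ.filter fun i => ω i = p).card = ∏ i, if ω i = p then x else 1 := by
    intro ω
    rw [Finset.prod_ite, Finset.prod_const, Finset.prod_const, one_pow, mul_one]
  have h2 : (∏ _i : Fin m, ∑ a : α, (if a = p then x else 1))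
      = ∑ ω : Fin m → α, ∏ i, if ω i = p then x else 1 := by
    rw [Finset.prod_univ_sum, Fintype.piFinset_univ]
  rw [Finset.sum_congr rfl fun ω _ => h1 ω, ← h2,
    Finset.prod_congr rfl fun (i : Fin m) _ => sum_ite_eq_card p x, Finset.prod_const,
    Finset.card_univ, Fintype.card_fin]

lemma card_upper (p : α) {x s : ℝ} (hx : 1 ≤ x) :
    ((univ.filter fun ω : Fin m → α =>
        s ≤ ((univ.filter fun i => ω i = p).card : ℝ)).card : ℝ) * x ^ s
      ≤ (x + ((Fintype.card α : ℝ) - 1)) ^ m := by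
  have hx0 : 0 < x := lt_of_lt_of_le one_pos hx
  have key : ((univ.filter fun ω : Fin m → α =>
      s ≤ ((univ.filter fun i => ω i = p).card : ℝ)).card : ℝ) * x ^ s
      = ∑ ω : Fin m → α, if s ≤ ((univ.filter fun i => ω i = p).card : ℝ)
          then x ^ s else 0 := by
    rw [← Finset.sum_filter, Finset.sum_const, nsmul_eq_mul]
  rw [key, ← sum_pow_cnt p x]
  refine Finset.sum_le_sum fun ω _ => ?_
  split
  · rw [← Real.rpow_natCast x]
    exact Real.rpow_le_rpow_of_exponent_le hx (by assumption)
  · positivity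

lemma card_lower (p : α) {x s : ℝ} (hx0 : 0 < x) (hx : x ≤ 1) :
    ((univ.filter fun ω : Fin m → α =>
        ((univ.filter fun i => ω i = p).card : ℝ) ≤ s).card : ℝ) * x ^ s
      ≤ (x + ((Fintype.card α : ℝ) - 1)) ^ m := by
  have key : ((univ.filter fun ω : Fin m → α =>
      ((univ.filter fun i => ω i = p).card : ℝ) ≤ s).card : ℝ) * x ^ s
      = ∑ ω : Fin m → α, if ((univ.filter fun i => ω i = p).card : ℝ) ≤ s
          then x ^ s else 0 := by
    rw [← Finset.sum_filter, Finset.sum_const, nsmul_eq_mul]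
  rw [key, ← sum_pow_cnt p x]
  refine Finset.sum_le_sum fun ω _ => ?_
  split
  · rw [← Real.rpow_natCast x]
    exact Real.rpow_le_rpow_of_exponent_ge hx0 hx (by assumption)
  · positivity

lemma base_pow_le {N : ℝ} (hN : 1 ≤ N) {x : ℝ} (hx0 : 0 < x) (m : ℕ) :
    (x + (N - 1)) ^ m ≤ N ^ m * Real.exp ((m : ℝ) * ((x - 1) / N)) := by
  have hN0 : 0 < N := lt_of_lt_of_le one_pos hN
  have h1 : x + (N - 1) = N * (1 + (x - 1) / N) := by field_simp; ring
  have h2 : 0 ≤ 1 + (x - 1) / N := by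
    have h3 : -1 ≤ (x - 1) / N := (le_div_iff₀ hN0).mpr (by nlinarith)
    linarith
  have h3 : 1 + (x - 1) / N ≤ Real.exp ((x - 1) / N) := by
    have := Real.add_one_le_exp ((x - 1) / N); linarith
  calc (x + (N - 1)) ^ m = N ^ m * (1 + (x - 1) / N) ^ m := by rw [h1, mul_pow]
    _ ≤ N ^ m * Real.exp ((x - 1) / N) ^ m :=
        mul_le_mul_of_nonneg_left (pow_le_pow_left₀ h2 h3 m) (by positivity)
    _ = N ^ m * Real.exp ((m : ℝ) * ((x - 1) / N)) := by rw [Real.exp_nat_mul]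

lemma exp_le_quad {L : ℝ} (h0 : 0 ≤ L) (h1 : L ≤ 1) : Real.exp L ≤ 1 + L + L ^ 2 := by
  have hb := Real.exp_bound (x := L) (by rwa [abs_of_nonneg h0]) (n := 2) two_pos
  have h2 := (abs_le.mp hb).2
  simp only [Finset.sum_range_succ, Finset.sum_range_zero] at h2
  norm_num at h2
  nlinarith

lemma exp_neg_le_quad {L : ℝ} (h0 : 0 ≤ L) (h1 : L ≤ 1) :
    Real.exp (-L) ≤ 1 - L + L ^ 2 := by
  have hb := Real.exp_bound (x := -L) (by rwa [abs_neg, abs_of_nonneg h0]) (n := 2) two_pos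
  have h2 := (abs_le.mp hb).2
  simp only [Finset.sum_range_succ, Finset.sum_range_zero] at h2
  norm_num at h2
  nlinarith

lemma pair_tail (p : α) {t μ : ℝ} (ht : 0 < t) (hμ : 0 < μ)
    (hμdef : (m : ℝ) = μ * (Fintype.card α : ℝ)) (hL1 : t / (2 * μ) ≤ 1)
    (hN : 1 ≤ (Fintype.card α : ℝ)) :
    ((univ.filter fun ω : Fin m → α =>
        ¬ |((univ.filter fun i => ω i = p).card : ℝ) - μ| ≤ t).card : ℝ)
      ≤ 2 * Real.exp (-(t ^ 2 / (4 * μ))) * (Fintype.card α : ℝ) ^ m := by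
  set N : ℝ := (Fintype.card α : ℝ) with hNdef
  have hN0 : 0 < N := lt_of_lt_of_le one_pos hN
  set L : ℝ := t / (2 * μ) with hLdef
  have hL0 : 0 < L := div_pos ht (by linarith)
  have hexp : μ * L ^ 2 - L * t = -(t ^ 2 / (4 * μ)) := by
    rw [hLdef]; field_simp; ring
  -- the subset step
  have hsub : (univ.filter fun ω : Fin m → α =>
      ¬ |((univ.filter fun i => ω i = p).card : ℝ) - μ| ≤ t)
      ⊆ (univ.filter fun ω : Fin m → α =>
          μ + t ≤ ((univ.filter fun i => ω i = p).card : ℝ))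
        ∪ (univ.filter fun ω : Fin m → α =>
          ((univ.filter fun i => ω i = p).card : ℝ) ≤ μ - t) := by
    intro ω hω
    simp only [Finset.mem_filter, Finset.mem_union, Finset.mem_univ, true_and,
      not_le] at *
    rcases lt_abs.mp hω with h | h
    · left; linarith
    · right; linarith
  -- upper tail
  have hmuN : (m : ℝ) * ((Real.exp L - 1) / N) = μ * (Real.exp L - 1) := by
    rw [hμdef]; field_simp
  have hUkey := card_upper (m := m) p (x := Real.exp L) (s := μ + t)
    (Real.one_le_exp hL0.le)
  have hrw : (Real.exp L) ^ (μ + t) = Real.exp (L * (μ + t)) := by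
    rw [Real.rpow_def_of_pos (Real.exp_pos L), Real.log_exp]
  have hbase := base_pow_le hN (Real.exp_pos L) (m := m)
  have hU : ((univ.filter fun ω : Fin m → α =>
      μ + t ≤ ((univ.filter fun i => ω i = p).card : ℝ)).card : ℝ)
      ≤ Real.exp (-(t ^ 2 / (4 * μ))) * N ^ m := by
    have h1 : ((univ.filter fun ω : Fin m → α =>
        μ + t ≤ ((univ.filter fun i => ω i = p).card : ℝ)).card : ℝ)
        * Real.exp (L * (μ + t)) ≤ N ^ m * Real.exp (μ * (Real.exp L - 1)) := by
      rw [← hrw]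
      calc _ ≤ (Real.exp L + (N - 1)) ^ m := hUkey
        _ ≤ N ^ m * Real.exp ((m : ℝ) * ((Real.exp L - 1) / N)) := hbase
        _ = N ^ m * Real.exp (μ * (Real.exp L - 1)) := by rw [hmuN]
    have h2 : ((univ.filter fun ω : Fin m → α =>
        μ + t ≤ ((univ.filter fun i => ω i = p).card : ℝ)).card : ℝ)
        ≤ N ^ m * Real.exp (μ * (Real.exp L - 1) - L * (μ + t)) := by
      rw [Real.exp_sub, ← mul_div_assoc, le_div_iff₀ (Real.exp_pos _)]
      exact h1
    refine h2.trans ?_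
    rw [mul_comm]
    refine mul_le_mul_of_nonneg_right ?_ (by positivity)
    refine Real.exp_le_exp.mpr ?_
    have hq := exp_le_quad hL0.le hL1
    nlinarith
  -- lower tail
  have hLkey := card_lower (m := m) p (x := Real.exp (-L)) (s := μ - t)
    (Real.exp_pos _) (Real.exp_le_one_iff.mpr (by linarith))
  have hrw2 : (Real.exp (-L)) ^ (μ - t) = Real.exp (-L * (μ - t)) := by
    rw [Real.rpow_def_of_pos (Real.exp_pos _), Real.log_exp]
  have hmuN2 : (m : ℝ) * ((Real.exp (-L) - 1) / N) = μ * (Real.exp (-L) - 1) := by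
    rw [hμdef]; field_simp
  have hLo : ((univ.filter fun ω : Fin m → α =>
      ((univ.filter fun i => ω i = p).card : ℝ) ≤ μ - t).card : ℝ)
      ≤ Real.exp (-(t ^ 2 / (4 * μ))) * N ^ m := by
    have h1 : ((univ.filter fun ω : Fin m → α =>
        ((univ.filter fun i => ω i = p).card : ℝ) ≤ μ - t).card : ℝ)
        * Real.exp (-L * (μ - t)) ≤ N ^ m * Real.exp (μ * (Real.exp (-L) - 1)) := by
      rw [← hrw2]
      calc _ ≤ (Real.exp (-L) + (N - 1)) ^ m := hLkey
        _ ≤ N ^ m * Real.exp ((m : ℝ) * ((Real.exp (-L) - 1) / N)) :=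
            base_pow_le hN (Real.exp_pos _) m
        _ = N ^ m * Real.exp (μ * (Real.exp (-L) - 1)) := by rw [hmuN2]
    have h2 : ((univ.filter fun ω : Fin m → α =>
        ((univ.filter fun i => ω i = p).card : ℝ) ≤ μ - t).card : ℝ)
        ≤ N ^ m * Real.exp (μ * (Real.exp (-L) - 1) - (-L * (μ - t))) := by
      rw [Real.exp_sub, ← mul_div_assoc, le_div_iff₀ (Real.exp_pos _)]
      exact h1
    refine h2.trans ?_
    rw [mul_comm]
    refine mul_le_mul_of_nonneg_right ?_ (by positivity)
    refine Real.exp_le_exp.mpr ?_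
    have hq := exp_neg_le_quad hL0.le hL1
    nlinarith
  -- combine
  have hcard : ((univ.filter fun ω : Fin m → α =>
      ¬ |((univ.filter fun i => ω i = p).card : ℝ) - μ| ≤ t).card : ℝ)
      ≤ ((univ.filter fun ω : Fin m → α =>
          μ + t ≤ ((univ.filter fun i => ω i = p).card : ℝ)).card : ℝ)
        + ((univ.filter fun ω : Fin m → α =>
          ((univ.filter fun i => ω i = p).card : ℝ) ≤ μ - t).card : ℝ) := by
    have := (Finset.card_le_card hsub).trans (Finset.card_union_le _ _)
    exact_mod_cast this
  calc _ ≤ _ := hcard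
    _ ≤ Real.exp (-(t ^ 2 / (4 * μ))) * N ^ m + Real.exp (-(t ^ 2 / (4 * μ))) * N ^ m :=
        add_le_add hU hLo
    _ = 2 * Real.exp (-(t ^ 2 / (4 * μ))) * N ^ m := by ring

end GSAux

open GS Finset Real

namespace GSAux

lemma two_mul_card_ndpair (n : ℕ) :
    2 * Fintype.card (NDPair n) = n * (n - 1) := by
  have h := Sym2.card_subtype_not_diag (α := Fin n)
  rw [Fintype.card_fin] at h
  have hdvd : 2 ∣ n * (n - 1) := by
    rcases Nat.even_or_odd n with he | ho
    · exact (he.mul_right _).two_dvd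
    · exact ((Nat.Odd.sub_odd ho odd_one).mul_left _).two_dvd
  rw [h, Nat.choose_two_right, Nat.mul_div_cancel' hdvd]

lemma card_ndpair_real {n : ℕ} (hn : 2 ≤ n) :
    2 * ((Fintype.card (NDPair n) : ℕ) : ℝ) = (n : ℝ) * ((n : ℝ) - 1) := by
  have h := two_mul_card_ndpair n
  have h1 : ((2 * Fintype.card (NDPair n) : ℕ) : ℝ) = ((n * (n - 1) : ℕ) : ℝ) := by
    exact congrArg (Nat.cast : ℕ → ℝ) h
  push_cast [Nat.cast_sub (by omega : 1 ≤ n)] at h1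
  linarith

lemma mgGraph_eq_pairCount {n mm : ℕ} (ω : MGOutcome n mm) {u v : Fin n}
    (h : ¬ (s(u, v) : Sym2 (Fin n)).IsDiag) :
    mgGraph ω u v = pairCount ω ⟨s(u, v), h⟩ := by
  refine congrArg Finset.card (Finset.filter_congr ?_)
  intro i _
  exact ⟨fun hh => Subtype.ext hh, fun hh => congrArg Subtype.val hh⟩

lemma event_implies {n mm : ℕ} (hn : 2 ≤ n) {μ t : ℝ} (hμ0 : 0 ≤ μ) (ht0 : 0 ≤ t)
    (ω : MGOutcome n mm) (h : ∀ q : NDPair n, |(pairCount ω q : ℝ) - μ| ≤ t) :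
    (muMax (mgGraph ω) : ℝ) - (muMin (mgGraph ω) : ℝ) ≤ 2 * t := by
  haveI : Nonempty (Fin n) := ⟨⟨0, by omega⟩⟩
  have hmax : (muMax (mgGraph ω) : ℝ) ≤ μ + t := by
    obtain ⟨pr, -, hsup⟩ := Finset.exists_mem_eq_sup (univ : Finset (Fin n × Fin n))
      Finset.univ_nonempty (fun p => if p.1 = p.2 then 0 else mgGraph ω p.1 p.2)
    rw [muMax, hsup]
    by_cases hd : pr.1 = pr.2
    · rw [if_pos hd]
      simpa using by linarith
    · rw [if_neg hd]
      have hnd : ¬ (s(pr.1, pr.2) : Sym2 (Fin n)).IsDiag := by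
        simpa [Sym2.mk_isDiag_iff] using hd
      rw [mgGraph_eq_pairCount ω hnd]
      have := (abs_le.mp (h ⟨_, hnd⟩)).2
      linarith
  have hminset : ({t | ∃ u v : Fin n, u ≠ v ∧ mgGraph ω u v = t} : Set ℕ).Nonempty := by
    refine ⟨mgGraph ω ⟨0, by omega⟩ ⟨1, by omega⟩, ⟨0, by omega⟩, ⟨1, by omega⟩, ?_, rfl⟩
    intro hc
    simpa [Fin.ext_iff] using hc
  have hmem : muMin (mgGraph ω) ∈ {t | ∃ u v : Fin n, u ≠ v ∧ mgGraph ω u v = t} :=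
    Nat.sInf_mem hminset
  obtain ⟨u, v, huv, heq⟩ := hmem
  have hmin : μ - t ≤ (muMin (mgGraph ω) : ℝ) := by
    have hnd : ¬ (s(u, v) : Sym2 (Fin n)).IsDiag := by
      simpa [Sym2.mk_isDiag_iff] using huv
    have h2 : (muMin (mgGraph ω) : ℝ) = (pairCount ω ⟨_, hnd⟩ : ℝ) := by
      rw [← heq, mgGraph_eq_pairCount ω hnd]
    rw [h2]
    have := (abs_le.mp (h ⟨_, hnd⟩)).1
    linarith
  linarith

lemma mgProb_eq (n mm : ℕ) (P : MGOutcome n mm → Prop) [DecidablePred P] :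
    mgProb n mm P
      = (((univ.filter P).card : ℕ) : ℝ) / ((Fintype.card (NDPair n) : ℝ) ^ mm) := by
  rw [mgProb, Nat.card_eq_fintype_card, Nat.card_eq_fintype_card, Fintype.card_subtype]
  congr 1
  rw [show Fintype.card (MGOutcome n mm) = Fintype.card (NDPair n) ^ mm by
    rw [Fintype.card_fun, Fintype.card_fin]]
  push_cast
  ring

lemma mgProb_le_one (n mm : ℕ) (P : MGOutcome n mm → Prop) : mgProb n mm P ≤ 1 := by
  classical
  rw [mgProb_eq]
  have hcard : (univ.filter P).card ≤ Fintype.card (NDPair n) ^ mm := by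
    calc (univ.filter P).card ≤ (univ : Finset (MGOutcome n mm)).card :=
          Finset.card_filter_le _ _
      _ = Fintype.card (MGOutcome n mm) := Finset.card_univ
      _ = Fintype.card (NDPair n) ^ mm := by rw [Fintype.card_fun, Fintype.card_fin]
  refine div_le_one_of_le₀ ?_ (by positivity)
  exact_mod_cast hcard

end GSAux

open GS Filter
set_option maxHeartbeats 3200000


/-- **Corollary.** If `m = ω(n² log n)`, then w.h.p. `M ~ M(n, m)` satisfies
`μ(M) - μ_min(M) = O(√(m log n / n²))`. -/
theorem random_multigraph_multiplicity_gap (m : ℕ → ℕ)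
    (hm : Tendsto (fun n : ℕ => (m n : ℝ) / ((n : ℝ) ^ 2 * Real.log n)) atTop atTop) :
    ∃ C : ℝ, Tendsto (fun n => mgProb n (m n) (fun ω =>
        (muMax (mgGraph ω) : ℝ) - (muMin (mgGraph ω) : ℝ)
          ≤ C * Real.sqrt ((m n : ℝ) * Real.log n / (n : ℝ) ^ 2)))
      atTop (nhds 1) := by
  classical
  refine ⟨14, ?_⟩
  have h4 : ∀ᶠ n : ℕ in atTop, (4 : ℝ) ≤ (m n : ℝ) / ((n : ℝ) ^ 2 * Real.log n) :=
    hm.eventually_ge_atTop 4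
  have h2 : ∀ᶠ n : ℕ in atTop, 2 ≤ n := eventually_ge_atTop 2
  refine tendsto_of_tendsto_of_tendsto_of_le_of_le'
    (g := fun n : ℕ => 1 - 1 / (n : ℝ)) (h := fun _ : ℕ => (1 : ℝ)) ?_
    tendsto_const_nhds ?_
    (Eventually.of_forall fun n => GSAux.mgProb_le_one _ _ _)
  · have := tendsto_one_div_atTop_nhds_zero_nat (𝕜 := ℝ)
    simpa using tendsto_const_nhds.sub this
  filter_upwards [h2, h4] with n hn hm4
  set N := Fintype.card (NDPair n) with hNdef
  have hn1 : (1 : ℝ) < (n : ℝ) := by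
    have : (2 : ℝ) ≤ (n : ℝ) := by exact_mod_cast hn
    linarith
  have hnn : (2 : ℝ) ≤ (n : ℝ) := by exact_mod_cast hn
  have hlog : 0 < Real.log n := Real.log_pos hn1
  have hn0 : (0 : ℝ) < (n : ℝ) := by linarith
  have hn2 : (0 : ℝ) < (n : ℝ) ^ 2 := by positivity
  have hd : (0 : ℝ) < (n : ℝ) ^ 2 * Real.log n := by positivity
  have hm4' : 4 * ((n : ℝ) ^ 2 * Real.log n) ≤ (m n : ℝ) := (le_div_iff₀ hd).mp hm4
  have hm0 : (0 : ℝ) < (m n : ℝ) := by nlinarith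
  have hNcast := GSAux.card_ndpair_real hn
  have hN1 : (1 : ℝ) ≤ (N : ℝ) := by nlinarith
  have hN0 : (0 : ℝ) < (N : ℝ) := by linarith
  have hNle : (N : ℝ) ≤ (n : ℝ) ^ 2 / 2 := by nlinarith
  have hNge : (n : ℝ) ^ 2 / 4 ≤ (N : ℝ) := by nlinarith
  set μ : ℝ := (m n : ℝ) / (N : ℝ) with hμ
  have hμ0 : 0 < μ := div_pos hm0 hN0
  have hμdef : (m n : ℝ) = μ * (N : ℝ) := by rw [hμ, div_mul_cancel₀ _ hN0.ne']
  set A : ℝ := (m n : ℝ) * Real.log n / (n : ℝ) ^ 2 with hA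
  have hA0 : 0 < A := by positivity
  set t : ℝ := 7 * Real.sqrt A with htdef
  have hsA : Real.sqrt A ^ 2 = A := Real.sq_sqrt hA0.le
  have hsA0 : 0 < Real.sqrt A := Real.sqrt_pos.mpr hA0
  have ht0 : 0 < t := by positivity
  have hμlow : 2 * (m n : ℝ) / (n : ℝ) ^ 2 ≤ μ := by
    rw [hμ]
    calc 2 * (m n : ℝ) / (n : ℝ) ^ 2 = (m n : ℝ) / ((n : ℝ) ^ 2 / 2) := by ring
      _ ≤ (m n : ℝ) / (N : ℝ) := div_le_div_of_nonneg_left hm0.le hN0 hNle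
  have hμup : μ ≤ 4 * (m n : ℝ) / (n : ℝ) ^ 2 := by
    rw [hμ]
    calc (m n : ℝ) / (N : ℝ) ≤ (m n : ℝ) / ((n : ℝ) ^ 2 / 4) :=
          div_le_div_of_nonneg_left hm0.le (by linarith) hNge
      _ = 4 * (m n : ℝ) / (n : ℝ) ^ 2 := by ring
  have hL1 : t / (2 * μ) ≤ 1 := by
    rw [div_le_one (by linarith)]
    have hsq : Real.sqrt A ≤ 4 * (m n : ℝ) / (7 * (n : ℝ) ^ 2) := by
      rw [show 4 * (m n : ℝ) / (7 * (n : ℝ) ^ 2)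
            = Real.sqrt ((4 * (m n : ℝ) / (7 * (n : ℝ) ^ 2)) ^ 2) from
          (Real.sqrt_sq (by positivity)).symm]
      apply Real.sqrt_le_sqrt
      rw [hA, div_pow, div_le_div_iff₀ hn2 (by positivity)]
      nlinarith [mul_le_mul_of_nonneg_right hm4'
        (le_of_lt (mul_pos hm0 hn2)), sq_nonneg ((n : ℝ) ^ 2)]
    have h1 : t ≤ 4 * (m n : ℝ) / (n : ℝ) ^ 2 := by
      rw [htdef]
      calc 7 * Real.sqrt A ≤ 7 * (4 * (m n : ℝ) / (7 * (n : ℝ) ^ 2)) := by linarith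
        _ = 4 * (m n : ℝ) / (n : ℝ) ^ 2 := by field_simp
    have hb : 4 * (m n : ℝ) / (n : ℝ) ^ 2 = 2 * (2 * (m n : ℝ) / (n : ℝ) ^ 2) := by
      ring
    linarith
  have hexp_le : Real.exp (-(t ^ 2 / (4 * μ))) ≤ ((n : ℝ) ^ 3)⁻¹ := by
    have ht2 : t ^ 2 = 49 * A := by rw [htdef, mul_pow, hsA]; norm_num
    have h4μ : 4 * μ ≤ 16 * (m n : ℝ) / (n : ℝ) ^ 2 := by
      have hb : 16 * (m n : ℝ) / (n : ℝ) ^ 2 = 4 * (4 * (m n : ℝ) / (n : ℝ) ^ 2) := by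
        ring
      linarith
    have h2' : t ^ 2 / (16 * (m n : ℝ) / (n : ℝ) ^ 2) ≤ t ^ 2 / (4 * μ) :=
      div_le_div_of_nonneg_left (by positivity) (by linarith) h4μ
    have h3' : t ^ 2 / (16 * (m n : ℝ) / (n : ℝ) ^ 2) = 49 * Real.log n / 16 := by
      rw [ht2, hA]
      field_simp
    have h1 : 3 * Real.log n ≤ t ^ 2 / (4 * μ) := by
      rw [h3'] at h2'
      linarith
    calc Real.exp (-(t ^ 2 / (4 * μ))) ≤ Real.exp (-(3 * Real.log n)) :=
          Real.exp_le_exp.mpr (by linarith)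
      _ = ((n : ℝ) ^ 3)⁻¹ := by
          rw [Real.exp_neg]
          congr 1
          rw [show (3 : ℝ) * Real.log n = Real.log ((n : ℝ) ^ 3) by
            rw [Real.log_pow]; norm_num]
          exact Real.exp_log (by positivity)
  have hpair : ∀ q : NDPair n,
      ((Finset.univ.filter fun ω : MGOutcome n (m n) =>
        ¬ |(pairCount ω q : ℝ) - μ| ≤ t).card : ℝ)
        ≤ 2 * ((n : ℝ) ^ 3)⁻¹ * (N : ℝ) ^ (m n) := by
    intro q
    have hthis := GSAux.pair_tail (m := m n) q ht0 hμ0 hμdef hL1 hN1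
    calc ((Finset.univ.filter fun ω : MGOutcome n (m n) =>
          ¬ |(pairCount ω q : ℝ) - μ| ≤ t).card : ℝ)
        ≤ 2 * Real.exp (-(t ^ 2 / (4 * μ))) * (N : ℝ) ^ (m n) := hthis
      _ ≤ 2 * ((n : ℝ) ^ 3)⁻¹ * (N : ℝ) ^ (m n) := by
          have : (0 : ℝ) ≤ (N : ℝ) ^ (m n) := by positivity
          nlinarith
  set E : MGOutcome n (m n) → Prop :=
    fun ω => ∀ q : NDPair n, |(pairCount ω q : ℝ) - μ| ≤ t with hE
  have hbadcard : ((Finset.univ.filter fun ω => ¬ E ω).card : ℝ)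
      ≤ (N : ℝ) ^ (m n) / n := by
    have hsub : (Finset.univ.filter fun ω => ¬ E ω)
        ⊆ Finset.univ.biUnion (fun q : NDPair n =>
            Finset.univ.filter fun ω => ¬ |(pairCount ω q : ℝ) - μ| ≤ t) := by
      intro ω hω
      simp only [Finset.mem_filter, Finset.mem_univ, true_and, hE, not_forall] at hω
      obtain ⟨q, hq⟩ := hω
      exact Finset.mem_biUnion.mpr ⟨q, Finset.mem_univ q,
        Finset.mem_filter.mpr ⟨Finset.mem_univ _, hq⟩⟩
    have h1 : ((Finset.univ.filter fun ω => ¬ E ω).card : ℝ)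
        ≤ ∑ q : NDPair n, ((Finset.univ.filter fun ω : MGOutcome n (m n) =>
            ¬ |(pairCount ω q : ℝ) - μ| ≤ t).card : ℝ) := by
      exact_mod_cast (Finset.card_le_card hsub).trans (Finset.card_biUnion_le)
    have h2' : ∑ q : NDPair n, ((Finset.univ.filter fun ω : MGOutcome n (m n) =>
          ¬ |(pairCount ω q : ℝ) - μ| ≤ t).card : ℝ)
        ≤ (N : ℝ) * (2 * ((n : ℝ) ^ 3)⁻¹ * (N : ℝ) ^ (m n)) := by
      calc _ ≤ ∑ _q : NDPair n, 2 * ((n : ℝ) ^ 3)⁻¹ * (N : ℝ) ^ (m n) :=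
            Finset.sum_le_sum fun q _ => hpair q
        _ = (N : ℝ) * (2 * ((n : ℝ) ^ 3)⁻¹ * (N : ℝ) ^ (m n)) := by
            rw [Finset.sum_const, Finset.card_univ, nsmul_eq_mul]
    have key : (N : ℝ) * (2 * ((n : ℝ) ^ 3)⁻¹) ≤ (n : ℝ)⁻¹ := by
      rw [show (N : ℝ) * (2 * ((n : ℝ) ^ 3)⁻¹) = 2 * (N : ℝ) / (n : ℝ) ^ 3 by ring,
        inv_eq_one_div, div_le_div_iff₀ (by positivity) hn0]
      nlinarith
    have h3' : (N : ℝ) * (2 * ((n : ℝ) ^ 3)⁻¹ * (N : ℝ) ^ (m n))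
        ≤ (N : ℝ) ^ (m n) / n := by
      calc (N : ℝ) * (2 * ((n : ℝ) ^ 3)⁻¹ * (N : ℝ) ^ (m n))
          = ((N : ℝ) * (2 * ((n : ℝ) ^ 3)⁻¹)) * (N : ℝ) ^ (m n) := by ring
        _ ≤ (n : ℝ)⁻¹ * (N : ℝ) ^ (m n) :=
            mul_le_mul_of_nonneg_right key (by positivity)
        _ = (N : ℝ) ^ (m n) / n := by rw [inv_mul_eq_div]
    linarith
  have hES : ∀ ω : MGOutcome n (m n), E ω →
      (muMax (mgGraph ω) : ℝ) - (muMin (mgGraph ω) : ℝ)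
        ≤ 14 * Real.sqrt ((m n : ℝ) * Real.log n / (n : ℝ) ^ 2) := by
    intro ω hω
    have h1 := GSAux.event_implies hn hμ0.le ht0.le ω hω
    calc (muMax (mgGraph ω) : ℝ) - (muMin (mgGraph ω) : ℝ) ≤ 2 * t := h1
      _ = 14 * Real.sqrt ((m n : ℝ) * Real.log n / (n : ℝ) ^ 2) := by
          rw [htdef, ← hA]; ring
  rw [GSAux.mgProb_eq]
  have hfilter : (Finset.univ.filter E).card
      ≤ (Finset.univ.filter fun ω : MGOutcome n (m n) =>
      (muMax (mgGraph ω) : ℝ) - (muMin (mgGraph ω) : ℝ)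
        ≤ 14 * Real.sqrt ((m n : ℝ) * Real.log n / (n : ℝ) ^ 2)).card := by
    apply Finset.card_le_card
    intro ω hω
    simp only [Finset.mem_filter, Finset.mem_univ, true_and] at *
    exact hES ω hω
  have htot : (Finset.univ.filter E).card
      + (Finset.univ.filter fun ω => ¬ E ω).card = N ^ (m n) := by
    rw [Finset.card_filter_add_card_filter_not, Finset.card_univ]
    rw [Fintype.card_fun, Fintype.card_fin]
  have hNmpos : (0 : ℝ) < (N : ℝ) ^ (m n) := by positivity
  rw [le_div_iff₀ hNmpos]
  have hcards : ((N : ℝ)) ^ (m n) - ((Finset.univ.filter fun ω => ¬ E ω).card : ℝ)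
      ≤ ((Finset.univ.filter fun ω : MGOutcome n (m n) =>
        (muMax (mgGraph ω) : ℝ) - (muMin (mgGraph ω) : ℝ)
          ≤ 14 * Real.sqrt ((m n : ℝ) * Real.log n / (n : ℝ) ^ 2)).card : ℝ) := by
    have hc1 : ((Finset.univ.filter E).card : ℝ)
        + ((Finset.univ.filter fun ω => ¬ E ω).card : ℝ) = (N : ℝ) ^ (m n) := by
      exact_mod_cast htot
    have hc2 : ((Finset.univ.filter E).card : ℝ)
        ≤ ((Finset.univ.filter fun ω : MGOutcome n (m n) =>
          (muMax (mgGraph ω) : ℝ) - (muMin (mgGraph ω) : ℝ)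
            ≤ 14 * Real.sqrt ((m n : ℝ) * Real.log n / (n : ℝ) ^ 2)).card : ℝ) := by
      exact_mod_cast hfilter
    linarith
  have hring : (1 - 1 / (n : ℝ)) * (N : ℝ) ^ (m n)
      = (N : ℝ) ^ (m n) - (N : ℝ) ^ (m n) / n := by ring
  linarith
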